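/- Let F and H be finite-dimensional subspaces of L²(ℝ) consisting of bounded functions, let A₂ ⊆ ℝ be measurable, and assume every element of H vanishes outside A₂. Suppose there are constants Φ₁, Φ₂ > 0 such that ‖u‖_∞² ≤ Φ₁ ∫ u² for all u ∈ F and sup_{y∈A₂} |v(y)|² ≤ Φ₂ ∫ v² for all v ∈ H. Then every t in the linear span of { (x,y) ↦ u(x)v(y) : u ∈ F, v ∈ H } satisfies ‖t‖_∞² ≤ Φ₁ Φ₂ ∫∫ t²(x,y) dx dy. -/

import Mathlib

open MeasureTheory

private lemma int_mul_L2 {f g : ℝ → ℝ}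
    (hf : MemLp f 2 (volume : Measure ℝ)) (hg : MemLp g 2 (volume : Measure ℝ)) :
    Integrable (fun x => f x * g x) (volume : Measure ℝ) := by
  refine (hf.integrable_sq.add hg.integrable_sq).mono' (hf.1.mul hg.1) ?_
  filter_upwards with x
  simp only [Real.norm_eq_abs, abs_mul, Pi.add_apply]
  nlinarith [sq_nonneg (|f x| - |g x|), sq_abs (f x), sq_abs (g x),
    abs_nonneg (f x), abs_nonneg (g x)]

private lemma expand_int {n : ℕ} (w : Fin n → ℝ → ℝ)
    (hw : ∀ i, MemLp (w i) 2 (volume : Measure ℝ)) (a b : Fin n → ℝ) :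
    ∫ z, (∑ i, a i * w i z) * (∑ j, b j * w j z) =
      ∑ i, ∑ j, a i * b j * ∫ z, w i z * w j z := by
  have h1 : ∀ z : ℝ, (∑ i, a i * w i z) * (∑ j, b j * w j z)
      = ∑ i, ∑ j, a i * b j * (w i z * w j z) := by
    intro z
    rw [Finset.sum_mul_sum]
    exact Finset.sum_congr rfl fun i _ => Finset.sum_congr rfl fun j _ => by ring
  simp_rw [h1]
  rw [integral_finset_sum]
  · refine Finset.sum_congr rfl fun i _ => ?_
    rw [integral_finset_sum]
    · exact Finset.sum_congr rfl fun j _ => integral_const_mul _ _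
    · exact fun j _ => (int_mul_L2 (hw i) (hw j)).const_mul _
  · exact fun i _ => integrable_finset_sum _ fun j _ => (int_mul_L2 (hw i) (hw j)).const_mul _

/-- Assumption M2 for tensor products.  If `‖u‖_∞² ≤ Φ₁ ∫ u²` on `F`
and `sup_{A₂} |v|² ≤ Φ₂ ∫ v²` on `H` (whose elements vanish outside `A₂`), then every
`t` in the span of the products `(x,y) ↦ u(x)v(y)` satisfies
`‖t‖_∞² ≤ Φ₁ Φ₂ ∫∫ t²`. -/
theorem tensor_product_norm_connection
    (F H : Submodule ℝ (ℝ → ℝ))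
    [FiniteDimensional ℝ F] [FiniteDimensional ℝ H]
    (hF_L2 : ∀ u ∈ F, MemLp u 2 (volume : Measure ℝ))
    (hH_L2 : ∀ v ∈ H, MemLp v 2 (volume : Measure ℝ))
    (hF_bdd : ∀ u ∈ F, ∃ C, ∀ x, |u x| ≤ C)
    (hH_bdd : ∀ v ∈ H, ∃ C, ∀ y, |v y| ≤ C)
    (A₂ : Set ℝ) (hA₂ : MeasurableSet A₂)
    (hH_supp : ∀ v ∈ H, ∀ y ∉ A₂, v y = 0)
    (Φ₁ Φ₂ : ℝ) (hΦ₁ : 0 < Φ₁) (hΦ₂ : 0 < Φ₂)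
    (hF_norm : ∀ u ∈ F, ∀ x : ℝ, u x ^ 2 ≤ Φ₁ * ∫ z, u z ^ 2)
    (hH_norm : ∀ v ∈ H, ∀ y ∈ A₂, v y ^ 2 ≤ Φ₂ * ∫ z, v z ^ 2)
    (t : ℝ × ℝ → ℝ)
    (ht : t ∈ Submodule.span ℝ
      {g : ℝ × ℝ → ℝ | ∃ u ∈ F, ∃ v ∈ H, g = fun p => u p.1 * v p.2}) :
    ∀ p : ℝ × ℝ, t p ^ 2 ≤ Φ₁ * Φ₂ * ∫ q, t q ^ 2 ∂(volume : Measure (ℝ × ℝ)) := by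
  classical
  obtain ⟨n, c, g, hg⟩ := Submodule.mem_span_set'.mp ht
  choose u hu v hv hguv using fun i => (g i).2
  set U : Fin n → ℝ → ℝ := fun i x => c i * u i x with hUdef
  have hUF : ∀ i, U i ∈ F := fun i => F.smul_mem (c i) (hu i)
  have ht' : ∀ p : ℝ × ℝ, t p = ∑ i, U i p.1 * v i p.2 := by
    intro p
    rw [← hg]
    simp only [Finset.sum_apply, Pi.smul_apply, smul_eq_mul]
    refine Finset.sum_congr rfl fun i _ => ?_
    rw [hguv i]
    simp only [hUdef]
    ring
  have hU2 : ∀ i, MemLp (U i) 2 (volume : Measure ℝ) := fun i => hF_L2 _ (hUF i)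
  have hv2 : ∀ i, MemLp (v i) 2 (volume : Measure ℝ) := fun i => hH_L2 _ (hv i)
  -- Gram matrix of the v's
  set G : Matrix (Fin n) (Fin n) ℝ := Matrix.of fun i j => ∫ z, v i z * v j z with hGdef
  have hGps : G.PosSemidef := by
    rw [Matrix.posSemidef_iff_dotProduct_mulVec]
    constructor
    · ext i j
      simp only [Matrix.conjTranspose_apply, hGdef, Matrix.of_apply, star_trivial]
      simp_rw [mul_comm]
    · intro a
      have key : dotProduct (star a) (G.mulVec a)
          = ∫ z, (∑ i, a i * v i z) * (∑ j, a j * v j z) := by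
        rw [expand_int v hv2 a a]
        simp only [dotProduct, Matrix.mulVec, star_trivial, Finset.mul_sum,
          hGdef, Matrix.of_apply]
        exact Finset.sum_congr rfl fun i _ => Finset.sum_congr rfl fun j _ => by ring
      rw [key]
      exact integral_nonneg fun z => mul_self_nonneg _
  open scoped MatrixOrder Matrix.Norms.L2Operator in
  obtain ⟨B, hB⟩ := CStarAlgebra.nonneg_iff_eq_star_mul_self.mp hGps.nonneg
  have hGentry : ∀ i j, G i j = ∑ k, B k i * B k j := by
    intro i j
    rw [hB]
    simp [Matrix.mul_apply, Matrix.conjTranspose_apply]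
  set f : Fin n → ℝ → ℝ := fun k x => ∑ i, B k i * U i x with hfdef
  have hfF : ∀ k, f k ∈ F := by
    intro k
    have hk : f k = ∑ i, B k i • U i := by
      ext z; simp [hfdef, Finset.sum_apply]
    rw [hk]
    exact Submodule.sum_mem F fun i _ => F.smul_mem _ (hUF i)
  have halg : ∀ x : ℝ, ∑ k, f k x ^ 2 = ∑ i, ∑ j, U i x * U j x * G i j := by
    intro x
    have h1 : ∀ k, f k x ^ 2 = ∑ i, ∑ j, B k i * B k j * (U i x * U j x) := by
      intro k
      simp only [hfdef, pow_two]
      rw [Finset.sum_mul_sum]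
      exact Finset.sum_congr rfl fun i _ => Finset.sum_congr rfl fun j _ => by ring
    simp_rw [h1]
    rw [Finset.sum_comm]
    refine Finset.sum_congr rfl fun i _ => ?_
    rw [Finset.sum_comm]
    refine Finset.sum_congr rfl fun j _ => ?_
    rw [hGentry i j, Finset.mul_sum]
    exact Finset.sum_congr rfl fun k _ => by ring
  -- total integral identity
  have hItot : ∫ q, t q ^ 2 ∂(volume : Measure (ℝ × ℝ))
      = ∑ i, ∑ j, (∫ z, U i z * U j z) * ∫ z, v i z * v j z := by
    have hq : ∀ q : ℝ × ℝ, t q ^ 2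
        = ∑ i, ∑ j, (U i q.1 * U j q.1) * (v i q.2 * v j q.2) := by
      intro q
      rw [ht' q, pow_two, Finset.sum_mul_sum]
      exact Finset.sum_congr rfl fun i _ => Finset.sum_congr rfl fun j _ => by ring
    simp_rw [hq]
    rw [MeasureTheory.Measure.volume_eq_prod]
    rw [integral_finset_sum]
    · refine Finset.sum_congr rfl fun i _ => ?_
      rw [integral_finset_sum]
      · refine Finset.sum_congr rfl fun j _ => ?_
        exact integral_prod_mul (fun x => U i x * U j x) (fun y => v i y * v j y)
      · exact fun j _ => (int_mul_L2 (hU2 i) (hU2 j)).mul_prod (int_mul_L2 (hv2 i) (hv2 j))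
    · exact fun i _ => integrable_finset_sum _ fun j _ =>
        (int_mul_L2 (hU2 i) (hU2 j)).mul_prod (int_mul_L2 (hv2 i) (hv2 j))
  have hsum_f : ∑ k, ∫ z, f k z ^ 2 = ∫ q, t q ^ 2 ∂(volume : Measure (ℝ × ℝ)) := by
    have h1 : ∀ k, ∫ z, f k z ^ 2 = ∑ i, ∑ j, B k i * B k j * ∫ z, U i z * U j z := by
      intro k
      have h2 : ∀ z : ℝ, f k z ^ 2 = (∑ i, B k i * U i z) * (∑ j, B k j * U j z) := by
        intro z; simp [hfdef, pow_two]
      simp_rw [h2]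
      exact expand_int U hU2 (B k) (B k)
    simp_rw [h1, hItot]
    rw [Finset.sum_comm]
    refine Finset.sum_congr rfl fun i _ => ?_
    rw [Finset.sum_comm]
    refine Finset.sum_congr rfl fun j _ => ?_
    rw [show (∫ z, v i z * v j z) = G i j from rfl, hGentry i j, Finset.mul_sum]
    exact Finset.sum_congr rfl fun k _ => by ring
  have hInonneg : 0 ≤ ∫ q, t q ^ 2 ∂(volume : Measure (ℝ × ℝ)) :=
    integral_nonneg fun q => sq_nonneg _
  rintro ⟨x, y⟩
  by_cases hy : y ∈ A₂
  · have hvx : (fun z => ∑ i, U i x * v i z) ∈ H := by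
      have hx : (fun z => ∑ i, U i x * v i z) = ∑ i, U i x • v i := by
        ext z; simp [Finset.sum_apply]
      rw [hx]
      exact Submodule.sum_mem H fun i _ => H.smul_mem _ (hv i)
    have h2 := hH_norm _ hvx y hy
    have hIx : ∫ z, (∑ i, U i x * v i z) ^ 2 = ∑ k, f k x ^ 2 := by
      have h3 : ∀ z : ℝ, (∑ i, U i x * v i z) ^ 2
          = (∑ i, U i x * v i z) * (∑ j, U j x * v j z) := fun z => pow_two _
      simp_rw [h3]
      rw [expand_int v hv2 (fun i => U i x) (fun i => U i x), halg x]
      rfl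
    rw [hIx] at h2
    have h3 : ∑ k, f k x ^ 2 ≤ Φ₁ * ∫ q, t q ^ 2 ∂(volume : Measure (ℝ × ℝ)) := by
      calc ∑ k, f k x ^ 2 ≤ ∑ k, Φ₁ * ∫ z, f k z ^ 2 :=
            Finset.sum_le_sum fun k _ => hF_norm _ (hfF k) x
        _ = Φ₁ * ∑ k, ∫ z, f k z ^ 2 := by rw [Finset.mul_sum]
        _ = Φ₁ * ∫ q, t q ^ 2 ∂(volume : Measure (ℝ × ℝ)) := by rw [hsum_f]
    calc t (x, y) ^ 2 ≤ Φ₂ * ∑ k, f k x ^ 2 := by rw [ht' (x, y)]; exact h2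
      _ ≤ Φ₂ * (Φ₁ * ∫ q, t q ^ 2 ∂(volume : Measure (ℝ × ℝ))) :=
            mul_le_mul_of_nonneg_left h3 hΦ₂.le
      _ = Φ₁ * Φ₂ * ∫ q, t q ^ 2 ∂(volume : Measure (ℝ × ℝ)) := by ring
  · have h0 : t (x, y) = 0 := by
      rw [ht' (x, y)]
      exact Finset.sum_eq_zero fun i _ => by
        rw [hH_supp _ (hv i) y hy, mul_zero]
    rw [h0]
    simpa using mul_nonneg (mul_nonneg hΦ₁.le hΦ₂.le) hInonneg
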